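/- In the star graph with a single disturbance at node 2, the source-node frequency variance q_{ω,22} = b₂²/(2dη) − γb₂²/(dn(2d²+γηn)) − γ(n−2)b₂²/(dn(2d²(n+1)+γη(n−1)²)) − γ²η(n−2)b₂²/(dn(2d²+γη)(2d²+γηn)) satisfies ∂q_{ω,22}/∂γ < 0 for all γ > 0, and lim_{γ→∞} q_{ω,22} = b₂²/(2dη) − (b₂²/(dη))(1/n − 1/(n²(n−1)²)). -/

import Mathlib

open Filter

/-- Star graph with a single disturbance at leaf node 2: the source-node frequency
variance is strictly decreasing in the line weight `γ`, with the stated limit as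
`γ → ∞`. -/
theorem stmt_18 (n d η b : ℝ) (hn : 3 ≤ n) (hd : 0 < d) (hη : 0 < η) (hb : b ≠ 0) :
    let q : ℝ → ℝ := fun γ =>
      b ^ 2 / (2 * d * η) - γ * b ^ 2 / (d * n * (2 * d ^ 2 + γ * η * n))
        - γ * (n - 2) * b ^ 2 / (d * n * (2 * d ^ 2 * (n + 1) + γ * η * (n - 1) ^ 2))
        - γ ^ 2 * η * (n - 2) * b ^ 2
          / (d * n * (2 * d ^ 2 + γ * η) * (2 * d ^ 2 + γ * η * n))
    (∀ γ : ℝ, 0 < γ → deriv q γ < 0) ∧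
    Tendsto q atTop
      (nhds (b ^ 2 / (2 * d * η)
        - (b ^ 2 / (d * η)) * (1 / n - 1 / (n ^ 2 * (n - 1) ^ 2)))) := by
  intro q
  have hb2 : (0:ℝ) < b ^ 2 := by positivity
  have hn0 : (0:ℝ) < n := by linarith
  have hn1 : (0:ℝ) < n - 1 := by linarith
  have hn2 : (0:ℝ) < n - 2 := by linarith
  constructor
  · intro γ hγ
    have hD1 : (0:ℝ) < d * n * (2 * d ^ 2 + γ * η * n) := by positivity
    have hD2 : (0:ℝ) < d * n * (2 * d ^ 2 * (n + 1) + γ * η * (n - 1) ^ 2) := by positivity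
    have hD3 : (0:ℝ) < d * n * (2 * d ^ 2 + γ * η) * (2 * d ^ 2 + γ * η * n) := by positivity
    have hid := hasDerivAt_id γ
    -- term 1
    have h1 : HasDerivAt (fun γ : ℝ => γ * b ^ 2 / (d * n * (2 * d ^ 2 + γ * η * n)))
        ((1 * b ^ 2 * (d * n * (2 * d ^ 2 + γ * η * n)) -
          γ * b ^ 2 * (d * n * (1 * η * n))) / (d * n * (2 * d ^ 2 + γ * η * n)) ^ 2) γ :=
      (hid.mul_const (b ^ 2)).div
        (((hid.mul_const η).mul_const n |>.const_add (2 * d ^ 2)).const_mul (d * n)) hD1.ne'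
    -- term 2
    have h2 : HasDerivAt (fun γ : ℝ =>
        γ * (n - 2) * b ^ 2 / (d * n * (2 * d ^ 2 * (n + 1) + γ * η * (n - 1) ^ 2)))
        ((1 * (n - 2) * b ^ 2 * (d * n * (2 * d ^ 2 * (n + 1) + γ * η * (n - 1) ^ 2)) -
          γ * (n - 2) * b ^ 2 * (d * n * (1 * η * (n - 1) ^ 2))) /
          (d * n * (2 * d ^ 2 * (n + 1) + γ * η * (n - 1) ^ 2)) ^ 2) γ :=
      ((hid.mul_const (n - 2)).mul_const (b ^ 2)).div
        (((hid.mul_const η).mul_const ((n - 1) ^ 2) |>.const_add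
          (2 * d ^ 2 * (n + 1))).const_mul (d * n)) hD2.ne'
    -- term 3
    have hA : HasDerivAt (fun γ : ℝ => d * n * (2 * d ^ 2 + γ * η)) (d * n * (1 * η)) γ :=
      ((hid.mul_const η).const_add (2 * d ^ 2)).const_mul (d * n)
    have hB : HasDerivAt (fun γ : ℝ => 2 * d ^ 2 + γ * η * n) (1 * η * n) γ :=
      (hid.mul_const η).mul_const n |>.const_add (2 * d ^ 2)
    have h3 : HasDerivAt (fun γ : ℝ =>
        γ ^ 2 * η * (n - 2) * b ^ 2 /
          (d * n * (2 * d ^ 2 + γ * η) * (2 * d ^ 2 + γ * η * n)))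
        ((((2:ℕ) * γ ^ 1 * η * (n - 2) * b ^ 2) *
            (d * n * (2 * d ^ 2 + γ * η) * (2 * d ^ 2 + γ * η * n)) -
          γ ^ 2 * η * (n - 2) * b ^ 2 *
            (d * n * (1 * η) * (2 * d ^ 2 + γ * η * n) +
              d * n * (2 * d ^ 2 + γ * η) * (1 * η * n))) /
          (d * n * (2 * d ^ 2 + γ * η) * (2 * d ^ 2 + γ * η * n)) ^ 2) γ :=
      ((((hasDerivAt_pow 2 γ).mul_const η).mul_const (n - 2)).mul_const (b ^ 2)).div
        (hA.mul hB) hD3.ne'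
    have hq : HasDerivAt q
        (0 - (1 * b ^ 2 * (d * n * (2 * d ^ 2 + γ * η * n)) -
            γ * b ^ 2 * (d * n * (1 * η * n))) / (d * n * (2 * d ^ 2 + γ * η * n)) ^ 2 -
          (1 * (n - 2) * b ^ 2 * (d * n * (2 * d ^ 2 * (n + 1) + γ * η * (n - 1) ^ 2)) -
            γ * (n - 2) * b ^ 2 * (d * n * (1 * η * (n - 1) ^ 2))) /
            (d * n * (2 * d ^ 2 * (n + 1) + γ * η * (n - 1) ^ 2)) ^ 2 -
          (((2:ℕ) * γ ^ 1 * η * (n - 2) * b ^ 2) *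
              (d * n * (2 * d ^ 2 + γ * η) * (2 * d ^ 2 + γ * η * n)) -
            γ ^ 2 * η * (n - 2) * b ^ 2 *
              (d * n * (1 * η) * (2 * d ^ 2 + γ * η * n) +
                d * n * (2 * d ^ 2 + γ * η) * (1 * η * n))) /
            (d * n * (2 * d ^ 2 + γ * η) * (2 * d ^ 2 + γ * η * n)) ^ 2) γ :=
      (((hasDerivAt_const γ (b ^ 2 / (2 * d * η))).sub h1).sub h2).sub h3
    rw [hq.deriv]
    have e1 : (0:ℝ) < (1 * b ^ 2 * (d * n * (2 * d ^ 2 + γ * η * n)) -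
        γ * b ^ 2 * (d * n * (1 * η * n))) / (d * n * (2 * d ^ 2 + γ * η * n)) ^ 2 := by
      apply div_pos
      · have : 1 * b ^ 2 * (d * n * (2 * d ^ 2 + γ * η * n)) -
            γ * b ^ 2 * (d * n * (1 * η * n)) = 2 * d ^ 2 * (d * n * b ^ 2) := by ring
        rw [this]; positivity
      · positivity
    have e2 : (0:ℝ) < (1 * (n - 2) * b ^ 2 * (d * n * (2 * d ^ 2 * (n + 1) + γ * η * (n - 1) ^ 2)) -
        γ * (n - 2) * b ^ 2 * (d * n * (1 * η * (n - 1) ^ 2))) /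
        (d * n * (2 * d ^ 2 * (n + 1) + γ * η * (n - 1) ^ 2)) ^ 2 := by
      apply div_pos
      · have : 1 * (n - 2) * b ^ 2 * (d * n * (2 * d ^ 2 * (n + 1) + γ * η * (n - 1) ^ 2)) -
            γ * (n - 2) * b ^ 2 * (d * n * (1 * η * (n - 1) ^ 2)) =
            2 * d ^ 2 * (n + 1) * ((n - 2) * (d * n * b ^ 2)) := by ring
        rw [this]; positivity
      · positivity
    have e3 : (0:ℝ) < (((2:ℕ) * γ ^ 1 * η * (n - 2) * b ^ 2) *
          (d * n * (2 * d ^ 2 + γ * η) * (2 * d ^ 2 + γ * η * n)) -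
        γ ^ 2 * η * (n - 2) * b ^ 2 *
          (d * n * (1 * η) * (2 * d ^ 2 + γ * η * n) +
            d * n * (2 * d ^ 2 + γ * η) * (1 * η * n))) /
        (d * n * (2 * d ^ 2 + γ * η) * (2 * d ^ 2 + γ * η * n)) ^ 2 := by
      apply div_pos
      · have : (((2:ℕ) * γ ^ 1 * η * (n - 2) * b ^ 2) *
              (d * n * (2 * d ^ 2 + γ * η) * (2 * d ^ 2 + γ * η * n)) -
            γ ^ 2 * η * (n - 2) * b ^ 2 *
              (d * n * (1 * η) * (2 * d ^ 2 + γ * η * n) +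
                d * n * (2 * d ^ 2 + γ * η) * (1 * η * n))) =
            2 * d ^ 2 * γ * η * (n - 2) * b ^ 2 * (d * n) * (4 * d ^ 2 + γ * η * n + γ * η) := by
          push_cast; ring
        rw [this]; positivity
      · positivity
    linarith
  · -- limits
    have hinv : Tendsto (fun γ : ℝ => γ⁻¹) atTop (nhds 0) := tendsto_inv_atTop_zero
    have hL1 : Tendsto (fun γ : ℝ => γ * b ^ 2 / (d * n * (2 * d ^ 2 + γ * η * n))) atTop
        (nhds (b ^ 2 / (d * n * (η * n)))) := by
      have hden : Tendsto (fun γ : ℝ => d * n * (2 * d ^ 2 * γ⁻¹ + η * n)) atTop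
          (nhds (d * n * (η * n))) := by
        have := (((hinv.const_mul (2 * d ^ 2)).add_const (η * n)).const_mul (d * n))
        simpa using this
      have hne : d * n * (η * n) ≠ 0 := by positivity
      have := (tendsto_const_nhds (α := ℝ) (f := atTop) (x := b ^ 2)).div hden hne
      refine this.congr' ?_
      filter_upwards [eventually_gt_atTop (0:ℝ)] with γ hγ
      simp only [Pi.div_apply]
      field_simp
    have hL2 : Tendsto (fun γ : ℝ =>
        γ * (n - 2) * b ^ 2 / (d * n * (2 * d ^ 2 * (n + 1) + γ * η * (n - 1) ^ 2))) atTop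
        (nhds ((n - 2) * b ^ 2 / (d * n * (η * (n - 1) ^ 2)))) := by
      have hden : Tendsto (fun γ : ℝ => d * n * (2 * d ^ 2 * (n + 1) * γ⁻¹ + η * (n - 1) ^ 2))
          atTop (nhds (d * n * (η * (n - 1) ^ 2))) := by
        have := (((hinv.const_mul (2 * d ^ 2 * (n + 1))).add_const
          (η * (n - 1) ^ 2)).const_mul (d * n))
        simpa using this
      have hne : d * n * (η * (n - 1) ^ 2) ≠ 0 := by positivity
      have := (tendsto_const_nhds (α := ℝ) (f := atTop) (x := (n - 2) * b ^ 2)).div hden hne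
      refine this.congr' ?_
      filter_upwards [eventually_gt_atTop (0:ℝ)] with γ hγ
      simp only [Pi.div_apply]
      field_simp
    have hL3 : Tendsto (fun γ : ℝ =>
        γ ^ 2 * η * (n - 2) * b ^ 2 /
          (d * n * (2 * d ^ 2 + γ * η) * (2 * d ^ 2 + γ * η * n))) atTop
        (nhds (η * (n - 2) * b ^ 2 / (d * n * η * (η * n)))) := by
      have hden : Tendsto
          (fun γ : ℝ => d * n * (2 * d ^ 2 * γ⁻¹ + η) * (2 * d ^ 2 * γ⁻¹ + η * n)) atTop
          (nhds (d * n * η * (η * n))) := by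
        have h1 := ((hinv.const_mul (2 * d ^ 2)).add_const η).const_mul (d * n)
        have h2 := (hinv.const_mul (2 * d ^ 2)).add_const (η * n)
        have := h1.mul h2
        simpa using this
      have hne : d * n * η * (η * n) ≠ 0 := by positivity
      have := (tendsto_const_nhds (α := ℝ) (f := atTop) (x := η * (n - 2) * b ^ 2)).div hden hne
      refine this.congr' ?_
      filter_upwards [eventually_gt_atTop (0:ℝ)] with γ hγ
      simp only [Pi.div_apply]
      field_simp
    have hq := ((tendsto_const_nhds (x := b ^ 2 / (2 * d * η)) (f := atTop)).sub hL1).sub hL2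
      |>.sub hL3
    have heq : b ^ 2 / (2 * d * η) - b ^ 2 / (d * n * (η * n)) -
        (n - 2) * b ^ 2 / (d * n * (η * (n - 1) ^ 2)) -
        η * (n - 2) * b ^ 2 / (d * n * η * (η * n)) =
        b ^ 2 / (2 * d * η) - (b ^ 2 / (d * η)) * (1 / n - 1 / (n ^ 2 * (n - 1) ^ 2)) := by
      have h1 : n ≠ 0 := hn0.ne'
      have h2 : n - 1 ≠ 0 := hn1.ne'
      field_simp
      ring
    rw [heq] at hq
    exact hq
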